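/- The canonical assignment induced by a hash function h with age-rule priorities (Robin Hood hashing) is linear: for every state q (a set of at most m−1 keys) and key v ∉ q, every element of q moves down (forward cyclically) by at most one cell in can(q ∪ {v}) compared to its position in can(q). Equivalently, upon deleting an element, every remaining element moves up by at most one cell. -/

import Mathlib

/-- The rank of `v` at cell `i`: the cyclic distance `(i - h v) mod m`. -/
def rnk {U : Type*} {m : ℕ} (h : U → Fin m) (v : U) (i : Fin m) : ℕ :=
  ((i : ℕ) + m - (h v : ℕ)) % m

/-- Cyclic distance from `a` to `b`, going forward, modulo `m`. -/
def cdist {m : ℕ} (a b : Fin m) : ℕ :=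
  ((b : ℕ) + m - (a : ℕ)) % m

/-- Robin Hood priority: `a >_i b` iff `rank(a,i) > rank(b,i)`, or equal ranks and `a > b`. -/
def prioGT {U : Type*} [LinearOrder U] {m : ℕ} (h : U → Fin m) (i : Fin m) (a b : U) : Prop :=
  rnk h a i > rnk h b i ∨ (rnk h a i = rnk h b i ∧ a > b)

/-- Priority extended to `Option U`: `none` is strictly below every `some v`. -/
def oGT {U : Type*} [LinearOrder U] {m : ℕ} (h : U → Fin m) (i : Fin m) :
    Option U → Option U → Prop
  | some a, some b => prioGT h i a b
  | some _, none => True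
  | none, _ => False

/-- `x ≥_i y` : strictly higher priority, or equal. -/
def oGE {U : Type*} [LinearOrder U] {m : ℕ} (h : U → Fin m) (i : Fin m)
    (x y : Option U) : Prop :=
  oGT h i x y ∨ x = y

/-- The Robin Hood ordering invariant: if `v` is stored at cell `i`, then every cell `j`
on the cyclic interval from `h v` to `i` (exclusive of `i`) stores a value of priority
at least that of `v` at cell `j`. -/
def OrdInv {U : Type*} [LinearOrder U] {m : ℕ} (h : U → Fin m) (A : Fin m → Option U) : Prop :=
  ∀ i v, A i = some v → ∀ j, cdist (h v) j < cdist (h v) i → oGE h j (A j) (some v)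

/-- The multiset of elements stored in the table `A` (counted with multiplicity). -/
def elemsOf {U : Type*} {m : ℕ} (A : Fin m → Option U) : Multiset U :=
  ((List.ofFn A).filterMap id : List U)

set_option linter.unusedSectionVars false
set_option maxHeartbeats 1000000

section CD
variable {m : ℕ} [NeZero m]

lemma cdist_eq' (a b : Fin m) :
    cdist a b = if (a:ℕ) ≤ (b:ℕ) then (b:ℕ) - (a:ℕ) else (b:ℕ) + m - (a:ℕ) := by
  have ha := a.isLt; have hb := b.isLt
  unfold cdist
  split_ifs with hab
  · have h1 : (b:ℕ) + m - a = (b - a) + m := by omega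
    rw [h1, Nat.add_mod_right, Nat.mod_eq_of_lt (by omega)]
  · rw [Nat.mod_eq_of_lt (by omega)]

lemma cdist_lt_m (a b : Fin m) : cdist a b < m := by
  have ha := a.isLt; have hb := b.isLt; rw [cdist_eq']; split_ifs <;> omega

lemma cdist_self (a : Fin m) : cdist a a = 0 := by rw [cdist_eq']; simp

lemma cdist_eq_zero_iff {a b : Fin m} : cdist a b = 0 ↔ a = b := by
  have ha := a.isLt; have hb := b.isLt
  constructor
  · intro h0; rw [cdist_eq'] at h0; apply Fin.ext; split_ifs at h0 <;> omega
  · rintro rfl; exact cdist_self a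

lemma cdist_left_inj {a b c : Fin m} (h : cdist a b = cdist a c) : b = c := by
  have := a.isLt; have := b.isLt; have := c.isLt
  simp only [cdist_eq'] at h; apply Fin.ext; split_ifs at h <;> omega

lemma cdist_sub_left {a b c : Fin m} (h : cdist a b ≤ cdist a c) :
    cdist b c = cdist a c - cdist a b := by
  have := a.isLt; have := b.isLt; have := c.isLt
  simp only [cdist_eq'] at *; split_ifs at * <;> omega

lemma cdist_sub_right {x a e : Fin m} (h : cdist x e ≤ cdist a e) :
    cdist a x = cdist a e - cdist x e := by
  have := a.isLt; have := x.isLt; have := e.isLt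
  simp only [cdist_eq'] at *; split_ifs at * <;> omega

lemma cdist_chain {x p e : Fin m} (hp : p ≠ e) (hxp : cdist x p ≤ cdist x e) :
    cdist e p = cdist e x + cdist x p := by
  have := x.isLt; have := p.isLt; have := e.isLt
  have hpe : (p:ℕ) ≠ (e:ℕ) := fun hh => hp (Fin.ext hh)
  simp only [cdist_eq'] at *; split_ifs at * <;> omega

lemma cdist_key {x p a e : Fin m} (h1 : cdist x p ≤ cdist x a)
    (h2 : cdist p e < cdist a e) : cdist x e < cdist a e := by
  have := x.isLt; have := p.isLt; have := a.isLt; have := e.isLt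
  simp only [cdist_eq'] at *; split_ifs at * <;> omega

lemma exists_cdist (e : Fin m) {t : ℕ} (ht : t < m) : ∃ k : Fin m, cdist e k = t := by
  have he := e.isLt
  refine ⟨⟨((e:ℕ) + t) % m, Nat.mod_lt _ (NeZero.pos m)⟩, ?_⟩
  have hk : ((e:ℕ) + t) % m = if (e:ℕ) + t < m then (e:ℕ) + t else (e:ℕ) + t - m := by
    split_ifs with hh
    · exact Nat.mod_eq_of_lt hh
    · rw [Nat.mod_eq_sub_mod (by omega), Nat.mod_eq_of_lt (by omega)]
  rw [cdist_eq']
  simp only [hk]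
  split_ifs <;> omega

lemma exists_cdist_right (e : Fin m) {t : ℕ} (ht : t < m) : ∃ k : Fin m, cdist k e = t := by
  have he := e.isLt
  refine ⟨⟨((e:ℕ) + (m - t)) % m, Nat.mod_lt _ (NeZero.pos m)⟩, ?_⟩
  have hk : ((e:ℕ) + (m - t)) % m = if (e:ℕ) + (m-t) < m then (e:ℕ) + (m-t) else (e:ℕ) + (m-t) - m := by
    split_ifs with hh
    · exact Nat.mod_eq_of_lt hh
    · rw [Nat.mod_eq_sub_mod (by omega), Nat.mod_eq_of_lt (by omega)]
  rw [cdist_eq']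
  simp only [hk]
  split_ifs <;> omega

end CD

section EL
variable {U : Type*} [DecidableEq U] {m : ℕ} [NeZero m]

lemma mem_elemsOf {A : Fin m → Option U} {u : U} : u ∈ elemsOf A ↔ ∃ i, A i = some u := by
  unfold elemsOf
  simp [List.mem_filterMap, List.mem_ofFn]

lemma mem_stored {A : Fin m → Option U} {s : Finset U} (hSt : elemsOf A = s.val) {u : U} :
    (∃ i, A i = some u) ↔ u ∈ s := by
  rw [← mem_elemsOf, hSt, ← Finset.mem_def]

lemma count_filterMap_id (u : U) : ∀ l : List (Option U),
    (l.filterMap id).count u = l.count (some u)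
  | [] => by simp
  | none :: l => by
      simp [List.filterMap_cons, List.count_cons, count_filterMap_id u l]; exact count_filterMap_id u l
  | some a :: l => by
      simp [List.filterMap_cons, List.count_cons, count_filterMap_id u l]; exact count_filterMap_id u l

lemma two_le_countP {α : Type*} [DecidableEq α] {p : α → Bool} {l : List α} {i j : α}
    (hij : i ≠ j) (hi : i ∈ l) (hj : j ∈ l) (hpi : p i) (hpj : p j) : 2 ≤ l.countP p := by
  have h1 : ({i, j} : Finset α) ⊆ (l.filter p).toFinset := by
    intro x hx
    simp only [Finset.mem_insert, Finset.mem_singleton] at hx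
    rcases hx with rfl | rfl <;> simp [List.mem_filter, *]
  have h2 := Finset.card_le_card h1
  rw [Finset.card_insert_of_notMem (by simp [hij]), Finset.card_singleton] at h2
  calc 2 ≤ (l.filter p).toFinset.card := h2
    _ ≤ (l.filter p).length := (l.filter p).toFinset_card_le
    _ = l.countP p := (List.countP_eq_length_filter (p := p) (l := l)).symm

lemma stored_inj {A : Fin m → Option U} {s : Finset U} (hSt : elemsOf A = s.val)
    {u : U} {i j : Fin m} (hi : A i = some u) (hj : A j = some u) : i = j := by
  by_contra hne
  have hnd : s.val.Nodup := s.nodup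
  rw [← hSt] at hnd
  have hle : Multiset.count u (elemsOf A) ≤ 1 := Multiset.nodup_iff_count_le_one.1 hnd u
  have h2 : 2 ≤ Multiset.count u (elemsOf A) := by
    unfold elemsOf
    rw [Multiset.coe_count, count_filterMap_id]
    rw [List.count, List.ofFn_eq_map, List.countP_map]
    exact two_le_countP hne (List.mem_finRange i) (List.mem_finRange j)
      (by simp [Function.comp, hi]) (by simp [Function.comp, hj])
  omega

lemma filterMap_id_full : ∀ l : List (Option U), (∀ o ∈ l, o ≠ none) →
    (l.filterMap id).length = l.length
  | [] => by simp
  | none :: l => by intro hh; exact absurd (hh none (by simp)) (by simp)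
  | some a :: l => by
      intro hh
      simp only [List.filterMap_cons, id, List.length_cons]
      exact congrArg (· + 1) (filterMap_id_full l (fun o ho => hh o (by simp [ho])))

lemma exists_none {A : Fin m → Option U} {s : Finset U} (hSt : elemsOf A = s.val)
    (hcard : s.card < m) : ∃ e, A e = none := by
  by_contra hno
  push_neg at hno
  have hall : ∀ o ∈ List.ofFn A, o ≠ none := by
    intro o ho
    rw [List.mem_ofFn] at ho
    obtain ⟨i, rfl⟩ := ho
    exact hno i
  have h1 : Multiset.card (elemsOf A) = m := by
    unfold elemsOf
    rw [Multiset.coe_card, filterMap_id_full _ hall, List.length_ofFn]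
  rw [hSt] at h1
  have : s.card = m := h1
  omega
end EL

section TBL
variable {U : Type*} [LinearOrder U] [DecidableEq U] {m : ℕ} [NeZero m] {h : U → Fin m}

lemma rnk_eq (h : U → Fin m) (a : U) (i : Fin m) : rnk h a i = cdist (h a) i := rfl

lemma prioGT_asymm {i : Fin m} {a b : U} (h1 : prioGT h i a b) (h2 : prioGT h i b a) : False := by
  rcases h1 with h1 | ⟨h1, h1'⟩ <;> rcases h2 with h2 | ⟨h2, h2'⟩
  · omega
  · omega
  · omega
  · exact lt_asymm h1' h2'

lemma no_cross {T : Fin m → Option U} (hInv : OrdInv h T) {c p : Fin m} {u : U}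
    (hc : T c = none) (hp : T p = some u) : cdist (h u) p ≤ cdist (h u) c := by
  by_contra hlt
  have h1 := hInv p u hp c (by omega)
  rw [hc] at h1
  rcases h1 with h1 | h1
  · simp only [oGT] at h1
  · simp at h1

lemma hash_le_pos {T : Fin m → Option U} (hInv : OrdInv h T) {e p : Fin m} {u : U}
    (he : T e = none) (hp : T p = some u) :
    cdist e (h u) ≤ cdist e p ∧ 1 ≤ cdist e (h u) := by
  have hpe : p ≠ e := by intro hh; rw [hh, he] at hp; cases hp
  have hxp : cdist (h u) p ≤ cdist (h u) e := no_cross hInv he hp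
  have hne : h u ≠ e := by
    intro hh
    rw [hh, cdist_self] at hxp
    have h0 : cdist e p = 0 := by omega
    exact hpe (cdist_eq_zero_iff.1 h0).symm
  have hch := cdist_chain hpe hxp
  have h1 : 1 ≤ cdist e (h u) := by
    rcases Nat.eq_zero_or_pos (cdist e (h u)) with h0 | h0
    · exact absurd (cdist_eq_zero_iff.1 h0).symm hne
    · omega
  exact ⟨by omega, h1⟩

def Pool (h : U → Fin m) (T : Fin m → Option U) (e k : Fin m) (u : U) : Prop :=
  (∃ p, T p = some u) ∧ 1 ≤ cdist e (h u) ∧ cdist e (h u) ≤ cdist e k ∧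
    ∀ p, T p = some u → cdist e k ≤ cdist e p

lemma pool_k_pos {T : Fin m → Option U} {e k : Fin m} {u : U}
    (hP : Pool h T e k u) : 1 ≤ cdist e k := le_trans hP.2.1 hP.2.2.1

lemma GM_some {T : Fin m → Option U} {s : Finset U} (hInv : OrdInv h T)
    (hSt : elemsOf T = s.val) {e k : Fin m} (he : T e = none) (hk : k ≠ e)
    {w : U} (hw : T k = some w) :
    Pool h T e k w ∧ ∀ u, Pool h T e k u → u ≠ w → prioGT h k w u := by
  have hlp := hash_le_pos hInv he hw
  constructor
  · refine ⟨⟨k, hw⟩, hlp.2, hlp.1, fun p hp => ?_⟩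
    rw [stored_inj hSt hp hw]
  · rintro u ⟨⟨p, hp⟩, h1, h2, h3⟩ hne
    have h4 : cdist e k ≤ cdist e p := h3 p hp
    have hpk : p ≠ k := by
      intro hh; rw [hh, hw] at hp; exact hne (by injection hp with h9; exact h9.symm)
    have h5 : cdist e k < cdist e p := by
      rcases Nat.lt_or_ge (cdist e k) (cdist e p) with hlt | hge
      · exact hlt
      · exact absurd (cdist_left_inj (le_antisymm hge h4 : cdist e p = cdist e k)) hpk
    have h6 : cdist (h u) k = cdist e k - cdist e (h u) := cdist_sub_left h2
    have h7 : cdist (h u) p = cdist e p - cdist e (h u) :=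
      cdist_sub_left (le_trans h2 (le_of_lt h5))
    have h8 := hInv p u hp k (by omega)
    rw [hw] at h8
    rcases h8 with h8 | h8
    · exact h8
    · exact absurd (by injection h8 with hh; exact hh.symm) hne

lemma GM_none {T : Fin m → Option U} (hInv : OrdInv h T) {e k : Fin m}
    (he : T e = none) (hn : T k = none) {u : U} : ¬ Pool h T e k u := by
  rintro ⟨⟨p, hp⟩, h1, h2, h3⟩
  have h4 : cdist e k ≤ cdist e p := h3 p hp
  have hpk : p ≠ k := by intro hh; rw [hh, hn] at hp; cases hp
  have h5 : cdist e k < cdist e p := by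
    rcases Nat.lt_or_ge (cdist e k) (cdist e p) with hlt | hge
    · exact hlt
    · exact absurd (cdist_left_inj (le_antisymm hge h4 : cdist e p = cdist e k)) hpk
  have h6 : cdist (h u) k = cdist e k - cdist e (h u) := cdist_sub_left h2
  have h7 : cdist (h u) p = cdist e p - cdist e (h u) :=
    cdist_sub_left (le_trans h2 (le_of_lt h5))
  have h8 := no_cross hInv hn hp
  omega

lemma PU {T : Fin m → Option U} (hInv : OrdInv h T) {e k k' : Fin m} (he : T e = none)
    (hkk : cdist e k' = cdist e k + 1) (u : U) :
    Pool h T e k' u ↔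
      ((Pool h T e k u ∧ T k ≠ some u) ∨ (h u = k' ∧ ∃ p, T p = some u)) := by
  constructor
  · rintro ⟨hex, h1, h2, h3⟩
    by_cases hu : h u = k'
    · exact Or.inr ⟨hu, hex⟩
    · left
      have hne : cdist e (h u) ≠ cdist e k' := fun hh => hu (cdist_left_inj hh)
      refine ⟨⟨hex, h1, by omega, fun p hp => by have := h3 p hp; omega⟩, ?_⟩
      intro hT
      have := h3 k hT
      omega
  · rintro (⟨⟨hex, h1, h2, h3⟩, hne⟩ | ⟨hu, hex⟩)
    · refine ⟨hex, h1, by omega, fun p hp => ?_⟩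
      have h4 := h3 p hp
      have hpk : p ≠ k := fun hh => hne (hh ▸ hp)
      have : cdist e p ≠ cdist e k := fun hh => hpk (cdist_left_inj hh)
      omega
    · refine ⟨hex, ?_, le_of_eq (by rw [hu]), fun p hp => ?_⟩
      · rw [hu]; omega
      · have := (hash_le_pos hInv he hp).1
        rw [hu] at this; exact this

lemma prio_shift {e k k2 : Fin m} {a b : U} (hk : cdist e k ≤ cdist e k2)
    (ha : cdist e (h a) ≤ cdist e k) (hb : cdist e (h b) ≤ cdist e k)
    (hgt : prioGT h k a b) : prioGT h k2 a b := by
  have e1 : rnk h a k = cdist e k - cdist e (h a) := by rw [rnk_eq]; exact cdist_sub_left ha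
  have e2 : rnk h b k = cdist e k - cdist e (h b) := by rw [rnk_eq]; exact cdist_sub_left hb
  have e3 : rnk h a k2 = cdist e k2 - cdist e (h a) := by
    rw [rnk_eq]; exact cdist_sub_left (le_trans ha hk)
  have e4 : rnk h b k2 = cdist e k2 - cdist e (h b) := by
    rw [rnk_eq]; exact cdist_sub_left (le_trans hb hk)
  rcases hgt with hgt | ⟨heq, hab⟩
  · left; omega
  · right; exact ⟨by omega, hab⟩

end TBL

section CNT
variable {U : Type*} [LinearOrder U] [DecidableEq U] {m : ℕ} [NeZero m] {h : U → Fin m}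

noncomputable def posOf (T : Fin m → Option U) (u : U) : Fin m :=
  if hx : ∃ p, T p = some u then hx.choose else (⟨0, NeZero.pos m⟩ : Fin m)

lemma posOf_spec {T : Fin m → Option U} {u : U} (hx : ∃ p, T p = some u) :
    T (posOf T u) = some u := by
  rw [posOf, dif_pos hx]; exact hx.choose_spec

open Finset in
lemma bound1 {T : Fin m → Option U} {s : Finset U} (hInv : OrdInv h T)
    (hSt : elemsOf T = s.val) {e a : Fin m} (he : T e = none) (hae : a ≠ e) :
    (s.filter (fun u => cdist (h u) e < cdist a e)).card ≤ cdist a e - 1 := by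
  classical
  have hae1 : 1 ≤ cdist a e := by
    rcases Nat.eq_zero_or_pos (cdist a e) with h0 | h0
    · exact absurd (cdist_eq_zero_iff.1 h0) hae
    · omega
  have step1 : (s.filter (fun u => cdist (h u) e < cdist a e)).card ≤
      (Finset.univ.filter (fun p : Fin m => 1 ≤ cdist a p ∧ cdist a p ≤ cdist a e - 1)).card := by
    apply Finset.card_le_card_of_injOn (fun u => posOf T u)
    · intro u hu
      rw [Finset.mem_coe, Finset.mem_filter] at hu
      obtain ⟨hus, hcond⟩ := hu
      have hex : ∃ p, T p = some u := (mem_stored hSt).2 hus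
      have hp : T (posOf T u) = some u := posOf_spec hex
      set p := posOf T u with hpd
      have hpe : p ≠ e := by intro hh; rw [hh, he] at hp; cases hp
      have h1 : cdist (h u) p ≤ cdist (h u) e := no_cross hInv he hp
      have h2 : cdist p e = cdist (h u) e - cdist (h u) p := cdist_sub_left h1
      have h3 : 1 ≤ cdist p e := by
        rcases Nat.eq_zero_or_pos (cdist p e) with h0 | h0
        · exact absurd (cdist_eq_zero_iff.1 h0) hpe
        · omega
      have h5 : cdist a p = cdist a e - cdist p e :=
        cdist_sub_right (by omega)
      rw [Finset.mem_coe, Finset.mem_filter]; beta_reduce; rw [← hpd]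
      exact ⟨Finset.mem_univ _, by omega, by omega⟩
    · intro u1 hu1 u2 hu2 heq
      rw [Finset.mem_coe, Finset.mem_filter] at hu1 hu2
      have e1 : T (posOf T u1) = some u1 := posOf_spec ((mem_stored hSt).2 hu1.1)
      have e2 : T (posOf T u2) = some u2 := posOf_spec ((mem_stored hSt).2 hu2.1)
      simp only at heq
      rw [heq, e2] at e1
      injection e1 with e1; exact e1.symm
  have step2 : (Finset.univ.filter (fun p : Fin m => 1 ≤ cdist a p ∧ cdist a p ≤ cdist a e - 1)).card
      ≤ cdist a e - 1 := by
    have := Finset.card_le_card_of_injOn (fun p => cdist a p)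
      (s := Finset.univ.filter (fun p : Fin m => 1 ≤ cdist a p ∧ cdist a p ≤ cdist a e - 1))
      (t := Finset.Icc 1 (cdist a e - 1))
      (by intro p hp; rw [Finset.mem_coe, Finset.mem_filter] at hp; rw [Finset.mem_coe, Finset.mem_Icc]; exact hp.2)
      (by intro p1 _ p2 _ heq; exact cdist_left_inj heq)
    rw [Nat.card_Icc] at this
    omega
  omega

open Finset in
lemma bound2 {T : Fin m → Option U} {s : Finset U} (hInv : OrdInv h T)
    (hSt : elemsOf T = s.val) {e : Fin m} {w : U} (hw : T e = some w)
    (hne : ∃ e', T e' = none) :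
    ∃ a, a ≠ e ∧ T a = none ∧
      cdist a e ≤ (s.filter (fun u => cdist (h u) e < cdist a e)).card := by
  classical
  obtain ⟨e', he'⟩ := hne
  have hee : e' ≠ e := by intro hh; rw [hh, hw] at he'; cases he'
  have hP : ∃ t, ∃ x : Fin m, cdist x e = t ∧ T x = none := ⟨cdist e' e, e', rfl, he'⟩
  classical
  obtain ⟨a, hat, han⟩ := Nat.find_spec hP
  set t0 := Nat.find hP with ht0d
  have hmin : ∀ t < t0, ¬ ∃ x : Fin m, cdist x e = t ∧ T x = none := fun t ht => Nat.find_min hP ht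
  have ht0pos : 1 ≤ t0 := by
    rcases Nat.eq_zero_or_pos t0 with h0 | h0
    · exfalso
      rw [h0] at hat
      have : a = e := cdist_eq_zero_iff.1 hat
      rw [this, hw] at han; cases han
    · omega
  have hane : a ≠ e := by
    intro hh; rw [hh, cdist_self] at hat; omega
  have hocc : ∀ p : Fin m, cdist p e < t0 → ∃ u, T p = some u := by
    intro p hp
    cases hTp : T p with
    | none => exact absurd ⟨p, rfl, hTp⟩ (hmin _ hp)
    | some u => exact ⟨u, rfl⟩
  refine ⟨a, hane, han, ?_⟩
  rw [hat]
  -- cells with cdist p e < t0 inject into the element filter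
  have step1 : (Finset.univ.filter (fun p : Fin m => cdist p e < t0)).card ≤
      (s.filter (fun u => cdist (h u) e < t0)).card := by
    apply Finset.card_le_card_of_injOn (fun p => (T p).getD w)
    · intro p hp
      rw [Finset.mem_coe, Finset.mem_filter] at hp
      obtain ⟨u, hu⟩ := hocc p hp.2
      rw [Finset.mem_coe, Finset.mem_filter]; beta_reduce
      have hgd : (T p).getD w = u := by rw [hu]; rfl
      rw [hgd]
      constructor
      · exact (mem_stored hSt).1 ⟨p, hu⟩
      · -- cdist (h u) e < t0
        have h1 : cdist (h u) p ≤ cdist (h u) a := no_cross hInv han hu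
        rw [← hat]
        exact cdist_key h1 (hat ▸ hp.2)
    · intro p1 hp1 p2 hp2 heq
      rw [Finset.mem_coe, Finset.mem_filter] at hp1 hp2
      obtain ⟨u1, hu1⟩ := hocc p1 hp1.2
      obtain ⟨u2, hu2⟩ := hocc p2 hp2.2
      simp only at heq
      rw [hu1, hu2] at heq
      simp only [Option.getD_some] at heq
      rw [heq] at hu1
      exact stored_inj hSt hu1 hu2
  have step0 : t0 ≤ (Finset.univ.filter (fun p : Fin m => cdist p e < t0)).card := by
    have ht0m : t0 < m := by
      have := cdist_lt_m a e; omega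
    set f : ℕ → Fin m := fun n => if hn : n < m then (exists_cdist_right e (t := n) hn).choose else e with hfd
    have hfspec : ∀ n, n < m → cdist (f n) e = n := by
      intro n hn
      rw [hfd]
      simp only [dif_pos hn]
      exact (exists_cdist_right e (t := n) hn).choose_spec
    have := Finset.card_le_card_of_injOn f
      (s := Finset.range t0) (t := Finset.univ.filter (fun p : Fin m => cdist p e < t0))
      ?_ ?_
    · rw [Finset.card_range] at this; exact this
    · intro n hn
      rw [Finset.mem_coe, Finset.mem_range] at hn
      rw [Finset.mem_coe, Finset.mem_filter, hfspec n (by omega)]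
      exact ⟨Finset.mem_univ _, hn⟩
    · intro n1 hn1 n2 hn2 heq
      rw [Finset.mem_coe, Finset.mem_range] at hn1 hn2
      have s1 := hfspec n1 (by omega)
      have s2 := hfspec n2 (by omega)
      rw [heq, s2] at s1
      omega
  omega

end CNT

section MAIN
variable {U : Type*} [LinearOrder U] [DecidableEq U] {m : ℕ} [NeZero m] {h : U → Fin m}

lemma empty_mono {A B : Fin m → Option U} {q : Finset U} {v : U}
    (hInvA : OrdInv h A) (hStA : elemsOf A = q.val)
    (hInvB : OrdInv h B) (hStB : elemsOf B = (insert v q).val)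
    (hq : q.card + 2 ≤ m) {e : Fin m} (heB : B e = none) : A e = none := by
  cases hAe : A e with
  | none => rfl
  | some w =>
    exfalso
    have hAne : ∃ e', A e' = none := exists_none hStA (by omega)
    obtain ⟨a, hae, han, hcard⟩ := bound2 hInvA hStA hAe hAne
    have h1 : (q.filter (fun u => cdist (h u) e < cdist a e)).card ≤
        ((insert v q).filter (fun u => cdist (h u) e < cdist a e)).card :=
      Finset.card_le_card (Finset.filter_subset_filter _ (Finset.subset_insert _ _))
    have h2 := bound1 hInvB hStB heB hae
    have h3 : 1 ≤ cdist a e := by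
      rcases Nat.eq_zero_or_pos (cdist a e) with h0 | h0
      · exact absurd (cdist_eq_zero_iff.1 h0) hae
      · omega
    omega

lemma master {A B : Fin m → Option U} {q : Finset U} {v : U}
    (hv : v ∉ q)
    (hInvA : OrdInv h A) (hStA : elemsOf A = q.val)
    (hInvB : OrdInv h B) (hStB : elemsOf B = (insert v q).val)
    {e : Fin m} (heA : A e = none) (heB : B e = none) :
    ∀ t, t < m → ∀ k', cdist e k' = t →
      (∀ u, Pool h B e k' u ↔ Pool h A e k' u) ∨
      (∃ x, ¬ Pool h A e k' x ∧ (∀ u, Pool h B e k' u ↔ (Pool h A e k' u ∨ u = x)) ∧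
        cdist e (h v) ≤ t) := by
  have exA : ∀ u : U, (∃ p, A p = some u) ↔ u ∈ q := fun u => mem_stored hStA
  have exB : ∀ u : U, (∃ p, B p = some u) ↔ u ∈ insert v q := fun u => mem_stored hStB
  intro t
  induction t with
  | zero =>
    intro _ k' hk'
    left
    intro u
    constructor
    · intro hP; exact absurd (hk' ▸ pool_k_pos hP) (by omega)
    · intro hP; exact absurd (hk' ▸ pool_k_pos hP) (by omega)
  | succ t ih =>
    intro ht' k' hk'
    have htm : t < m := by omega
    obtain ⟨k, hk⟩ := exists_cdist e htm
    have hkk : cdist e k' = cdist e k + 1 := by omega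
    have IH := ih htm k hk
    have PU_A := fun u => PU hInvA (e := e) (k := k) (k' := k') heA hkk u
    have PU_B := fun u => PU hInvB (e := e) (k := k) (k' := k') heB hkk u
    rcases IH with hEq | ⟨x, hxA, hiff, hhv⟩
    · -- pools equal at k; first show B k = A k
      have hBk : B k = A k := by
        by_cases hA : ∃ u, Pool h A e k u
        · obtain ⟨u0, hu0⟩ := hA
          have hke : k ≠ e := by
            intro hh; rw [hh, cdist_self] at hk
            have := pool_k_pos hu0; omega
          cases hAk : A k with
          | none => exact absurd hu0 (GM_none hInvA heA hAk)
          | some a =>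
            cases hBk2 : B k with
            | none => exact absurd ((hEq u0).2 hu0) (GM_none hInvB heB hBk2)
            | some b =>
              have GMa := GM_some hInvA hStA heA hke hAk
              have GMb := GM_some hInvB hStB heB hke hBk2
              by_cases hab : b = a
              · rw [hab]
              · exfalso
                exact prioGT_asymm
                  (GMa.2 b ((hEq b).1 GMb.1) hab)
                  (GMb.2 a ((hEq a).2 GMa.1) (fun hh => hab hh.symm))
        · push_neg at hA
          cases hAk : A k with
          | none =>
            cases hBk2 : B k with
            | none => rfl
            | some b =>
              have hke : k ≠ e := by intro hh; rw [hh, heB] at hBk2; cases hBk2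
              have GMb := GM_some hInvB hStB heB hke hBk2
              exact absurd ((hEq b).1 GMb.1) (hA b)
          | some a =>
            have hke : k ≠ e := by intro hh; rw [hh, heA] at hAk; cases hAk
            have GMa := GM_some hInvA hStA heA hke hAk
            exact absurd GMa.1 (hA a)
      by_cases hvk : h v = k'
      · right
        refine ⟨v, ?_, ?_, by rw [hvk]; omega⟩
        · rintro ⟨hex, -⟩; exact hv ((exA v).1 hex)
        · intro u
          rw [PU_B u, PU_A u]
          constructor
          · rintro (⟨hPB, hBne⟩ | ⟨hu, hexB⟩)
            · exact Or.inl (Or.inl ⟨(hEq u).1 hPB, hBk ▸ hBne⟩)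
            · rcases Finset.mem_insert.1 ((exB u).1 hexB) with rfl | huq
              · exact Or.inr rfl
              · exact Or.inl (Or.inr ⟨hu, (exA u).2 huq⟩)
          · rintro ((⟨hPA, hAne⟩ | ⟨hu, hexA⟩) | rfl)
            · exact Or.inl ⟨(hEq u).2 hPA, hBk ▸ hAne⟩
            · exact Or.inr ⟨hu, (exB u).2 (Finset.mem_insert_of_mem ((exA u).1 hexA))⟩
            · exact Or.inr ⟨hvk, (exB u).2 (Finset.mem_insert_self _ _)⟩
      · left
        intro u
        rw [PU_B u, PU_A u]
        constructor
        · rintro (⟨hPB, hBne⟩ | ⟨hu, hexB⟩)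
          · exact Or.inl ⟨(hEq u).1 hPB, hBk ▸ hBne⟩
          · rcases Finset.mem_insert.1 ((exB u).1 hexB) with rfl | huq
            · exact absurd hu hvk
            · exact Or.inr ⟨hu, (exA u).2 huq⟩
        · rintro (⟨hPA, hAne⟩ | ⟨hu, hexA⟩)
          · exact Or.inl ⟨(hEq u).2 hPA, hBk ▸ hAne⟩
          · exact Or.inr ⟨hu, (exB u).2 (Finset.mem_insert_of_mem ((exA u).1 hexA))⟩
    · -- floater x at k
      have hPBx : Pool h B e k x := (hiff x).2 (Or.inr rfl)
      have hke : k ≠ e := by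
        intro hh; rw [hh, cdist_self] at hk
        have := pool_k_pos hPBx; omega
      have hvne' : h v ≠ k' := by
        intro hh
        have : cdist e (h v) = t + 1 := by rw [hh]; omega
        omega
      have hBk : ∃ b, B k = some b := by
        cases hBk2 : B k with
        | none => exact absurd hPBx (GM_none hInvB heB hBk2)
        | some b => exact ⟨b, rfl⟩
      obtain ⟨b, hBkb⟩ := hBk
      have GMb := GM_some hInvB hStB heB hke hBkb
      have hxhash : cdist e (h x) ≤ t := hk ▸ hPBx.2.2.1
      cases hAk : A k with
      | none =>
        have hAnone : ∀ u, ¬ Pool h A e k u := fun u => GM_none hInvA heA hAk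
        have hbx : b = x := ((hiff b).1 GMb.1).resolve_left (hAnone b)
        left
        intro u
        rw [PU_B u, PU_A u]
        constructor
        · rintro (⟨hPB, hBne⟩ | ⟨hu, hexB⟩)
          · rcases (hiff u).1 hPB with hPA | rfl
            · exact absurd hPA (hAnone u)
            · exact absurd (hBkb.trans (hbx ▸ rfl)) hBne
          · rcases Finset.mem_insert.1 ((exB u).1 hexB) with rfl | huq
            · exact absurd hu hvne'
            · exact Or.inr ⟨hu, (exA u).2 huq⟩
        · rintro (⟨hPA, -⟩ | ⟨hu, hexA⟩)
          · exact absurd hPA (hAnone u)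
          · exact Or.inr ⟨hu, (exB u).2 (Finset.mem_insert_of_mem ((exA u).1 hexA))⟩
      | some a =>
        have GMa := GM_some hInvA hStA heA hke hAk
        have hax : a ≠ x := fun hh => hxA (hh ▸ GMa.1)
        have hahash : cdist e (h a) ≤ t := hk ▸ GMa.1.2.2.1
        rcases (hiff b).1 GMb.1 with hbA | hbx
        · -- b ∈ Pool A k, so b = a : floater x stays
          have hba : b = a := by
            by_contra hne
            exact prioGT_asymm (GMa.2 b hbA hne)
              (GMb.2 a ((hiff a).2 (Or.inl GMa.1)) (fun hh => hne hh.symm))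
          have hBk2 : B k = some a := hba ▸ hBkb
          right
          refine ⟨x, ?_, ?_, by omega⟩
          · rw [PU_A x]
            rintro (⟨hPA, -⟩ | ⟨hhx, -⟩)
            · exact hxA hPA
            · rw [hhx] at hxhash; omega
          · intro u
            rw [PU_B u, PU_A u]
            constructor
            · rintro (⟨hPB, hBne⟩ | ⟨hu, hexB⟩)
              · rcases (hiff u).1 hPB with hPA | rfl
                · refine Or.inl (Or.inl ⟨hPA, ?_⟩)
                  intro hh
                  rw [hAk] at hh
                  exact hBne (by rw [hBk2, hh])
                · exact Or.inr rfl
              · rcases Finset.mem_insert.1 ((exB u).1 hexB) with rfl | huq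
                · exact absurd hu hvne'
                · exact Or.inl (Or.inr ⟨hu, (exA u).2 huq⟩)
            · rintro ((⟨hPA, hAne⟩ | ⟨hu, hexA⟩) | rfl)
              · refine Or.inl ⟨(hiff u).2 (Or.inl hPA), ?_⟩
                intro hh
                rw [hBk2] at hh
                exact hAne (by rw [hAk, hh])
              · exact Or.inr ⟨hu, (exB u).2 (Finset.mem_insert_of_mem ((exA u).1 hexA))⟩
              · refine Or.inl ⟨(hiff u).2 (Or.inr rfl), ?_⟩
                rw [hBk2]
                intro hh
                exact hax (by injection hh)
        · -- b = x : x placed, a becomes floater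
          have hBk2 : B k = some x := hbx ▸ hBkb
          right
          refine ⟨a, ?_, ?_, by omega⟩
          · rw [PU_A a]
            rintro (⟨-, hAne⟩ | ⟨hha, -⟩)
            · exact hAne hAk
            · rw [hha] at hahash; omega
          · intro u
            rw [PU_B u, PU_A u]
            constructor
            · rintro (⟨hPB, hBne⟩ | ⟨hu, hexB⟩)
              · rcases (hiff u).1 hPB with hPA | rfl
                · by_cases hua : u = a
                  · exact Or.inr hua
                  · refine Or.inl (Or.inl ⟨hPA, ?_⟩)
                    intro hh
                    rw [hAk] at hh
                    exact hua (by injection hh with hh2; exact hh2.symm)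
                · exact absurd hBk2 hBne
              · rcases Finset.mem_insert.1 ((exB u).1 hexB) with rfl | huq
                · exact absurd hu hvne'
                · exact Or.inl (Or.inr ⟨hu, (exA u).2 huq⟩)
            · rintro ((⟨hPA, hAne⟩ | ⟨hu, hexA⟩) | rfl)
              · refine Or.inl ⟨(hiff u).2 (Or.inl hPA), ?_⟩
                rw [hBk2]
                intro hh
                have : u = x := by injection hh with hh2; exact hh2.symm
                exact hxA (this ▸ hPA)
              · exact Or.inr ⟨hu, (exB u).2 (Finset.mem_insert_of_mem ((exA u).1 hexA))⟩
              · refine Or.inl ⟨(hiff u).2 (Or.inl GMa.1), ?_⟩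
                rw [hBk2]
                intro hh
                exact hax (by injection hh with hh2; exact hh2.symm)
end MAIN

theorem stmt18 {U : Type*} [LinearOrder U] [DecidableEq U] {m : ℕ} [NeZero m]
    (h : U → Fin m)
    -- the canonical assignment induced by h and age-rule (Robin Hood) priorities
    (can : Finset U → Fin m → Option U)
    (hcanInv : ∀ q : Finset U, q.card + 1 ≤ m → OrdInv h (can q))
    (hcanStore : ∀ q : Finset U, q.card + 1 ≤ m → elemsOf (can q) = q.val)
    (q : Finset U) (v : U) (hv : v ∉ q) (hq : q.card + 2 ≤ m) :
    -- every element of q moves forward (cyclically) by at most one cell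
    -- in can(q ∪ {v}) compared to can(q)
    ∀ v' ∈ q, ∀ i j : Fin m,
      can q i = some v' → can (insert v q) j = some v' → cdist i j ≤ 1 := by
  intro v' hv' i j hAi hBj
  have hcardA : q.card + 1 ≤ m := by omega
  have hcardI : (insert v q).card = q.card + 1 := Finset.card_insert_of_notMem hv
  have hcardB : (insert v q).card + 1 ≤ m := by omega
  set A := can q with hAdef
  set B := can (insert v q) with hBdef
  have hInvA : OrdInv h A := hcanInv q hcardA
  have hInvB : OrdInv h B := hcanInv (insert v q) hcardB
  have hStA : elemsOf A = q.val := hcanStore q hcardA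
  have hStB : elemsOf B = (insert v q).val := hcanStore (insert v q) hcardB
  obtain ⟨e, heB⟩ := exists_none hStB (by omega)
  have heA : A e = none := empty_mono hInvA hStA hInvB hStB hq heB
  have hie : i ≠ e := by intro hh; rw [hh, heA] at hAi; cases hAi
  have hje : j ≠ e := by intro hh; rw [hh, heB] at hBj; cases hBj
  have htm : cdist e i < m := cdist_lt_m e i
  have GMaA := GM_some hInvA hStA heA hie hAi
  have IH := master hv hInvA hStA hInvB hStB heA heB (cdist e i) htm i rfl
  rcases IH with hEq | ⟨x, hxA, hiff, hhv⟩
  · -- pools equal at i : B i = some v'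
    have hPB : Pool h B e i v' := (hEq v').2 GMaA.1
    cases hBi : B i with
    | none => exact absurd hPB (GM_none hInvB heB hBi)
    | some b =>
      have GMb := GM_some hInvB hStB heB hie hBi
      have hbv : b = v' := by
        by_contra hne
        exact prioGT_asymm (GMb.2 v' hPB (fun hh => hne hh.symm))
          (GMaA.2 b ((hEq b).1 GMb.1) hne)
      have hji : j = i := stored_inj hStB hBj (hbv ▸ hBi)
      rw [hji, cdist_self]
      omega
  · have hPBv' : Pool h B e i v' := (hiff v').2 (Or.inl GMaA.1)
    cases hBi : B i with
    | none => exact absurd hPBv' (GM_none hInvB heB hBi)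
    | some b =>
      have GMb := GM_some hInvB hStB heB hie hBi
      by_cases hbv : b = v'
      · have hji : j = i := stored_inj hStB hBj (hbv ▸ hBi)
        rw [hji, cdist_self]
        omega
      · have hbx : b = x := by
          rcases (hiff b).1 GMb.1 with hbA | hbx
          · exact absurd (prioGT_asymm (GMaA.2 b hbA hbv)
              (GMb.2 v' hPBv' (fun hh => hbv hh.symm))) not_false
          · exact hbx
        have hBne : B i ≠ some v' := by rw [hBi]; intro hh; exact hbv (by injection hh)
        have hdej : cdist e i ≤ cdist e j := hPBv'.2.2.2 j hBj
        have hji : j ≠ i := fun hh => hBne (hh ▸ hBj)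
        have hdne : cdist e j ≠ cdist e i := fun hh => hji (cdist_left_inj hh)
        have ht1 : cdist e i + 1 < m := by have := cdist_lt_m e j; omega
        obtain ⟨k', hk'⟩ := exists_cdist e ht1
        have hkk : cdist e k' = cdist e i + 1 := hk'
        have hPB' : Pool h B e k' v' :=
          (PU hInvB heB hkk v').2 (Or.inl ⟨hPBv', hBne⟩)
        have hk'e : k' ≠ e := by
          intro hh; rw [hh, cdist_self] at hkk; omega
        have hv'hash : cdist e (h v') ≤ cdist e i := GMaA.1.2.2.1
        cases hBk' : B k' with
        | none => exact absurd hPB' (GM_none hInvB heB hBk')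
        | some b' =>
          have GMb' := GM_some hInvB hStB heB hk'e hBk'
          have hmax : ∀ w, Pool h B e k' w → w ≠ v' → prioGT h k' v' w := by
            intro w hw hwne
            rcases (PU hInvB heB hkk w).1 hw with ⟨hPBw, hBnew⟩ | ⟨hhw, -⟩
            · have hwx : w ≠ x := by
                intro hh; exact hBnew (by rw [hBi, hbx, hh])
              have hPAw : Pool h A e i w := ((hiff w).1 hPBw).resolve_right hwx
              exact prio_shift (by omega) hv'hash hPAw.2.2.1 (GMaA.2 w hPAw hwne)
            · -- h w = k' : rank 0
              left
              rw [rnk_eq, rnk_eq, hhw, cdist_self]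
              have hne2 : h v' ≠ k' := by
                intro hh; rw [hh] at hv'hash; omega
              have : cdist (h v') k' = cdist e k' - cdist e (h v') :=
                cdist_sub_left (by omega)
              have h0 : cdist (h v') k' ≠ 0 := by
                intro hh; exact hne2 (cdist_eq_zero_iff.1 hh)
              omega
          have hb'v : b' = v' := by
            by_contra hne
            exact prioGT_asymm (GMb'.2 v' hPB' (fun hh => hne hh.symm))
              (hmax b' GMb'.1 hne)
          have hjk : j = k' := stored_inj hStB hBj (hb'v ▸ hBk')
          have : cdist i j = cdist e k' - cdist e i := by
            rw [hjk]; exact cdist_sub_left (by omega)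
          omega
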